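/- If C is a category with exactly one object (i.e., a finite monoid), then the embedding Ψ : R[C] → R(x) ⊗_τ kC is an isomorphism of k-algebras. -/

import Mathlib

open CategoryTheory TensorProduct

variable (k : Type) [Field k]
variable (C : Type) [SmallCategory C] [Fintype C] [DecidableEq C]
  [∀ x y : C, Fintype (x ⟶ y)] [∀ x y : C, DecidableEq (x ⟶ y)]

abbrev Mor (C : Type) [SmallCategory C] : Type := Σ x y : C, x ⟶ y

def compMor {C : Type} [SmallCategory C] (g f : Mor C) (h : g.1 = f.2.1) : Mor C :=
  ⟨f.1, g.2.1, f.2.2 ≫ eqToHom h.symm ≫ g.2.2⟩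

/-- The category algebra `kC` (as a `k`-vector space with basis `Mor C`). -/
abbrev CatAlg : Type := Mor C →₀ k

/-- Product of two basis elements of the category algebra. -/
noncomputable def catMulSingle (g f : Mor C) : CatAlg k C :=
  if h : g.1 = f.2.1 then Finsupp.single (compMor g f h) 1 else 0

/-- The multiplication of the category algebra, as a bilinear map. -/
noncomputable def catMulL : CatAlg k C →ₗ[k] CatAlg k C →ₗ[k] CatAlg k C :=
  Finsupp.lsum k fun g => LinearMap.toSpanSingleton k _
    (Finsupp.lsum k fun f => LinearMap.toSpanSingleton k _ (catMulSingle k C g f))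

/-- The identity `∑_{x ∈ Ob C} 1_x` of the category algebra. -/
noncomputable def catOne : CatAlg k C := ∑ x : C, Finsupp.single ⟨x, x, 𝟙 x⟩ 1

variable (R : C ⥤ AlgCat k)

/-- `A = ⨂_{x ∈ Ob C} R(x)`. -/
abbrev TensA : Type := ⨂[k] x : C, R.obj x

/-- `μ_A`, the multiplication of `A = ⨂_x R(x)`. -/
noncomputable def muA : TensA k C R ⊗[k] TensA k C R →ₗ[k] TensA k C R :=
  LinearMap.mul' k _

/-- `μ_B`, the multiplication of `B = kC`. -/
noncomputable def muB : CatAlg k C ⊗[k] CatAlg k C →ₗ[k] CatAlg k C :=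
  TensorProduct.lift (catMulL k C)

section Twist
variable {A B : Type} [AddCommGroup A] [AddCommGroup B] [Module k A] [Module k B]

/-- The Čap–Schichl–Vaňžura twisting-map conditions for a linear map
`τ : B ⊗ A → A ⊗ B`, with respect to multiplications `μA, μB` and units `oneA, oneB`. -/
def IsTwistingMap (μA : A ⊗[k] A →ₗ[k] A) (μB : B ⊗[k] B →ₗ[k] B) (oneA : A) (oneB : B)
    (τ : B ⊗[k] A →ₗ[k] A ⊗[k] B) : Prop :=
  (∀ b : B, τ (b ⊗ₜ oneA) = oneA ⊗ₜ b) ∧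
  (∀ a : A, τ (oneB ⊗ₜ a) = a ⊗ₜ oneB) ∧
  (τ ∘ₗ TensorProduct.map μB μA =
    TensorProduct.map μA μB
    ∘ₗ (TensorProduct.assoc k A A (B ⊗[k] B)).symm.toLinearMap
    ∘ₗ LinearMap.lTensor A (TensorProduct.assoc k A B B).toLinearMap
    ∘ₗ LinearMap.lTensor A (LinearMap.rTensor B τ)
    ∘ₗ LinearMap.lTensor A (TensorProduct.assoc k B A B).symm.toLinearMap
    ∘ₗ (TensorProduct.assoc k A B (A ⊗[k] B)).toLinearMap
    ∘ₗ TensorProduct.map τ τ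
    ∘ₗ (TensorProduct.assoc k (B ⊗[k] A) B A).toLinearMap
    ∘ₗ LinearMap.rTensor A (TensorProduct.assoc k B A B).symm.toLinearMap
    ∘ₗ (TensorProduct.assoc k B (A ⊗[k] B) A).symm.toLinearMap
    ∘ₗ LinearMap.lTensor B (LinearMap.rTensor A τ)
    ∘ₗ LinearMap.lTensor B (TensorProduct.assoc k B A A).symm.toLinearMap
    ∘ₗ (TensorProduct.assoc k B B (A ⊗[k] A)).toLinearMap)

/-- The twisted-tensor-product multiplication
`μ_τ = (μ_A ⊗ μ_B) ∘ (id_A ⊗ τ ⊗ id_B)` on `A ⊗ B`. -/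
noncomputable def muTau (μA : A ⊗[k] A →ₗ[k] A) (μB : B ⊗[k] B →ₗ[k] B)
    (τ : B ⊗[k] A →ₗ[k] A ⊗[k] B) :
    (A ⊗[k] B) ⊗[k] (A ⊗[k] B) →ₗ[k] A ⊗[k] B :=
  TensorProduct.map μA μB
  ∘ₗ (TensorProduct.assoc k A A (B ⊗[k] B)).symm.toLinearMap
  ∘ₗ LinearMap.lTensor A (TensorProduct.assoc k A B B).toLinearMap
  ∘ₗ LinearMap.lTensor A (LinearMap.rTensor B τ)
  ∘ₗ LinearMap.lTensor A (TensorProduct.assoc k B A B).symm.toLinearMap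
  ∘ₗ (TensorProduct.assoc k A B (A ⊗[k] B)).toLinearMap

end Twist

/-- The defining formula of the twisting map `τ` of Proposition 2.1: on a basis element
`f ⊗ (⨂_x r_x)` it returns `(⨂_t r'_t) ⊗ f`, where `r'_{c(f)} = R(f)(r_{d(f)})` and
`r'_t = r_t` for `t ≠ c(f)`. -/
def TauFormula (τ : CatAlg k C ⊗[k] TensA k C R →ₗ[k] TensA k C R ⊗[k] CatAlg k C) : Prop :=
  ∀ (f : Mor C) (r : ∀ x : C, R.obj x),
    τ (Finsupp.single f 1 ⊗ₜ PiTensorProduct.tprod k r) =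
      (PiTensorProduct.tprod k (Function.update r f.2.1 (R.map f.2.2 (r f.1)))) ⊗ₜ
        Finsupp.single f 1

/-- Underlying space of the skew category algebra `R[C]`. -/
def SkewAlg : Type := ∀ f : Mor C, R.obj f.2.1

noncomputable instance : AddCommGroup (SkewAlg k C R) := by unfold SkewAlg; infer_instance
noncomputable instance : Module k (SkewAlg k C R) := by unfold SkewAlg; infer_instance

/-- The basis-type element `r·f` of the skew category algebra. -/
noncomputable def skSingle (f : Mor C) (r : R.obj f.2.1) : SkewAlg k C R :=
  fun h => if hh : f = h then cast (congrArg (fun m : Mor C => (R.obj m.2.1 : Type)) hh) r else 0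

/-- Multiplication of the skew category algebra. -/
noncomputable def skewMul (a b : SkewAlg k C R) : SkewAlg k C R :=
  ∑ g : Mor C, ∑ f : Mor C,
    if h : g.1 = f.2.1 then
      skSingle k C R (compMor g f h) (a g * R.map g.2.2 (R.map (eqToHom h.symm) (b f)))
    else 0

/-- The identity element of the skew category algebra. -/
noncomputable def skewOne : SkewAlg k C R :=
  ∑ x : C, skSingle k C R ⟨x, x, 𝟙 x⟩ 1

set_option linter.unusedSectionVars false
open scoped TensorProduct
open CategoryTheory

-- SkewAlg pointwise ops are defeq to Pi
example (a b : SkewAlg k C R) (g : Mor C) : (a + b) g = a g + b g := rfl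
example (c : k) (a : SkewAlg k C R) (g : Mor C) : (c • a) g = c • a g := rfl
example (g : Mor C) : (0 : SkewAlg k C R) g = 0 := rfl

lemma skSingle_eq (f : Mor C) (r : R.obj f.2.1) : skSingle k C R f r = Pi.single f r := by
  funext h
  by_cases hfh : f = h
  · subst hfh; simp [skSingle, Pi.single_eq_same]
  · simp [skSingle, hfh, Pi.single_eq_of_ne (Ne.symm hfh)]

noncomputable def evalL (f : Mor C) : SkewAlg k C R →ₗ[k] R.obj f.2.1 where
  toFun a := a f
  map_add' _ _ := rfl
  map_smul' _ _ := rfl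

noncomputable def Psi : SkewAlg k C R →ₗ[k] TensA k C R ⊗[k] CatAlg k C :=
  ∑ f : Mor C,
    ((TensorProduct.mk k (TensA k C R) (CatAlg k C)).flip (Finsupp.single f 1)).comp
      (((PiTensorProduct.tprod k).toLinearMap (fun x : C => (1 : R.obj x)) f.2.1).comp
        (evalL k C R f))

lemma Psi_apply (a : SkewAlg k C R) :
    Psi k C R a = ∑ f : Mor C,
      (PiTensorProduct.tprod k (Function.update (fun x : C => (1 : R.obj x)) f.2.1 (a f))) ⊗ₜ
        Finsupp.single f 1 := by
  simp [Psi, evalL, LinearMap.sum_apply, MultilinearMap.toLinearMap]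
  rfl

lemma Psi_skSingle (f : Mor C) (r : R.obj f.2.1) :
    Psi k C R (skSingle k C R f r) =
      (PiTensorProduct.tprod k
        (Function.update (fun x : C => (1 : R.obj x)) f.2.1 r)) ⊗ₜ Finsupp.single f 1 := by
  rw [Psi_apply, skSingle_eq]
  rw [Finset.sum_eq_single f]
  · simp
  · intro g _ hg
    rw [Pi.single_eq_of_ne hg]
    simp
  · simp
set_option linter.unusedSectionVars false
open scoped TensorProduct
open CategoryTheory

section Inverse
variable (x₀ : C) (hx : ∀ y : C, y = x₀)

/-- evaluation at x₀ as multilinear map (needs subsingleton-ness). -/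
noncomputable def evalMl : MultilinearMap k (fun x : C => R.obj x) (R.obj x₀) where
  toFun r := r x₀
  map_update_add' r y a b := by have h := hx y; subst h; simp
  map_update_smul' r y c a := by have h := hx y; subst h; simp

noncomputable def theta : TensA k C R →ₗ[k] R.obj x₀ :=
  PiTensorProduct.lift (evalMl k C R x₀ hx)

@[simp] lemma theta_tprod (r : ∀ x : C, R.obj x) :
    theta k C R x₀ hx (PiTensorProduct.tprod k r) = r x₀ := by
  simp [theta, evalMl]

noncomputable def castL (y : C) : R.obj x₀ →ₗ[k] R.obj y :=
  (R.map (eqToHom (hx y).symm)).hom.toLinearMap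

end Inverse

section Inverse2
variable (x₀ : C) (hx : ∀ y : C, y = x₀)

noncomputable def phiBil :
    TensA k C R →ₗ[k] CatAlg k C →ₗ[k] SkewAlg k C R :=
  LinearMap.mk₂ k
    (fun t c => (fun f => c f • castL k C R x₀ hx f.2.1 (theta k C R x₀ hx t) : SkewAlg k C R))
    (by intro t t' c; funext f; show c f • (_ : R.obj f.2.1) = c f • (_ : R.obj f.2.1) + c f • (_ : R.obj f.2.1); simp [smul_add])
    (by intro m t c; funext f; show c f • (_ : R.obj f.2.1) = m • (c f • (_ : R.obj f.2.1)); rw [map_smul, map_smul, smul_comm])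
    (by intro t c c'; funext f; show (c + c') f • (_ : R.obj f.2.1) = c f • (_ : R.obj f.2.1) + c' f • (_ : R.obj f.2.1);
        simp [add_smul])
    (by intro m t c; funext f; show (m • c) f • (_ : R.obj f.2.1) = m • (c f • (_ : R.obj f.2.1)); simp [mul_smul])

noncomputable def Phi : TensA k C R ⊗[k] CatAlg k C →ₗ[k] SkewAlg k C R :=
  TensorProduct.lift (phiBil k C R x₀ hx)

lemma Phi_tmul (t : TensA k C R) (c : CatAlg k C) (f : Mor C) :
    Phi k C R x₀ hx (t ⊗ₜ c) f = c f • castL k C R x₀ hx f.2.1 (theta k C R x₀ hx t) := rfl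

lemma Phi_Psi (a : SkewAlg k C R) : Phi k C R x₀ hx (Psi k C R a) = a := by
  rw [Psi_apply, map_sum]
  funext g
  show (∑ f : Mor C, Phi k C R x₀ hx _) g = a g
  rw [show ∀ (s : Finset (Mor C)) (F : Mor C → SkewAlg k C R), (∑ f ∈ s, F f) g = ∑ f ∈ s, F f g from
    fun s F => Finset.sum_apply (M := fun f : Mor C => R.obj f.2.1) g s F]
  rw [Finset.sum_eq_single g]
  · rw [Phi_tmul, theta_tprod, Finsupp.single_eq_same]
    obtain ⟨gx, gy, gm⟩ := g
    have h2 : gy = x₀ := hx gy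
    subst h2
    simp [castL]
  · intro f _ hf
    rw [Phi_tmul, Finsupp.single_eq_of_ne hf.symm, zero_smul]
  · simp

lemma update_one_castL (x₀ : C) (hx : ∀ y : C, y = x₀) (y : C) (r : ∀ x : C, R.obj x) :
    Function.update (fun x : C => (1 : R.obj x)) y (castL k C R x₀ hx y (r x₀)) = r := by
  have hy := hx y; subst hy
  funext z
  have hz := hx z; subst hz
  simp [castL]

lemma Psi_gen (x₀ : C) (hx : ∀ y : C, y = x₀) (r : ∀ x : C, R.obj x) (g : Mor C) (c : k) :
    Psi k C R (skSingle k C R g (c • castL k C R x₀ hx g.2.1 (r x₀))) =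
      (PiTensorProduct.tprod k r) ⊗ₜ Finsupp.single g c := by
  rw [Psi_skSingle, MultilinearMap.map_update_smul, update_one_castL,
    TensorProduct.smul_tmul, Finsupp.smul_single', mul_one]

lemma Psi_surjective (x₀ : C) (hx : ∀ y : C, y = x₀) :
    Function.Surjective (Psi k C R) := by
  have hrange : ∀ z : TensA k C R ⊗[k] CatAlg k C, z ∈ LinearMap.range (Psi k C R) := by
    intro z
    induction z using TensorProduct.induction_on with
    | zero => exact zero_mem _
    | add u v hu hv => exact add_mem hu hv
    | tmul t c =>
      induction c using Finsupp.induction with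
      | zero => rw [TensorProduct.tmul_zero]; exact zero_mem _
      | single_add g b crest _ _ ih =>
        rw [TensorProduct.tmul_add]
        refine add_mem ?_ ih
        clear ih
        induction t using PiTensorProduct.induction_on with
        | smul_tprod c' r =>
          refine ⟨skSingle k C R g ((c' * b) • castL k C R x₀ hx g.2.1 (r x₀)), ?_⟩
          rw [Psi_gen, TensorProduct.smul_tmul, Finsupp.smul_single']
        | add u v hu hv =>
          rw [TensorProduct.add_tmul]; exact add_mem hu hv
  intro z; obtain ⟨a, ha⟩ := hrange z; exact ⟨a, ha⟩

lemma Psi_one :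
    Psi k C R (skewOne k C R) =
      (PiTensorProduct.tprod k fun x : C => (1 : R.obj x)) ⊗ₜ catOne k C := by
  rw [skewOne, map_sum, catOne, TensorProduct.tmul_sum]
  refine Finset.sum_congr rfl fun y _ => ?_
  rw [Psi_skSingle, Function.update_eq_self_iff.2 rfl]

@[simp] lemma skew_add_apply (a b : SkewAlg k C R) (g : Mor C) : (a + b) g = a g + b g := rfl
@[simp] lemma skew_smul_apply (c : k) (a : SkewAlg k C R) (g : Mor C) : (c • a) g = c • a g := rfl

lemma skSingle_add (f : Mor C) (r s : R.obj f.2.1) :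
    skSingle k C R f (r + s) = skSingle k C R f r + skSingle k C R f s := by
  simp [skSingle_eq, Pi.single_add]
  rfl

lemma skSingle_smul (f : Mor C) (c : k) (r : R.obj f.2.1) :
    skSingle k C R f (c • r) = c • skSingle k C R f r := by
  simp [skSingle_eq, Pi.single_smul]
  rfl

lemma skSingle_zero (f : Mor C) : skSingle k C R f 0 = 0 := by
  simp [skSingle_eq]
  rfl

noncomputable def skewMulL : SkewAlg k C R →ₗ[k] SkewAlg k C R →ₗ[k] SkewAlg k C R :=
  LinearMap.mk₂ k (skewMul k C R)
    (by
      intro a a' b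
      unfold skewMul
      rw [← Finset.sum_add_distrib]
      refine Finset.sum_congr rfl fun g _ => ?_
      rw [← Finset.sum_add_distrib]
      refine Finset.sum_congr rfl fun f _ => ?_
      by_cases h : g.1 = f.2.1
      · simp only [dif_pos h, skew_add_apply, add_mul]; exact skSingle_add k C R _ _ _
      · simp [h])
    (by
      intro m a b
      unfold skewMul
      rw [Finset.smul_sum]
      refine Finset.sum_congr rfl fun g _ => ?_
      rw [Finset.smul_sum]
      refine Finset.sum_congr rfl fun f _ => ?_
      by_cases h : g.1 = f.2.1
      · simp only [dif_pos h, skew_smul_apply, smul_mul_assoc]; exact skSingle_smul k C R _ _ _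
      · simp [h])
    (by
      intro a b b'
      unfold skewMul
      rw [← Finset.sum_add_distrib]
      refine Finset.sum_congr rfl fun g _ => ?_
      rw [← Finset.sum_add_distrib]
      refine Finset.sum_congr rfl fun f _ => ?_
      by_cases h : g.1 = f.2.1
      · simp only [dif_pos h, skew_add_apply, map_add, mul_add]; exact skSingle_add k C R _ _ _
      · simp [h])
    (by
      intro m a b
      unfold skewMul
      rw [Finset.smul_sum]
      refine Finset.sum_congr rfl fun g _ => ?_
      rw [Finset.smul_sum]
      refine Finset.sum_congr rfl fun f _ => ?_
      by_cases h : g.1 = f.2.1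
      · simp only [dif_pos h, skew_smul_apply, map_smul, mul_smul_comm]; exact skSingle_smul k C R _ _ _
      · simp [h])

lemma muTau_tmul {A B : Type} [AddCommGroup A] [AddCommGroup B] [Module k A] [Module k B]
    (mA : A ⊗[k] A →ₗ[k] A) (mB : B ⊗[k] B →ₗ[k] B) (τ : B ⊗[k] A →ₗ[k] A ⊗[k] B)
    (a a' c : A) (b b' d : B) (h : τ (b ⊗ₜ a') = c ⊗ₜ d) :
    muTau k mA mB τ ((a ⊗ₜ b) ⊗ₜ (a' ⊗ₜ b')) = mA (a ⊗ₜ c) ⊗ₜ mB (d ⊗ₜ b') := by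
  simp [muTau, h]

@[simp] lemma skSingle_same (f : Mor C) (r : R.obj f.2.1) : skSingle k C R f r f = r := by
  rw [skSingle_eq]; simp

lemma skSingle_ne {f h : Mor C} (hne : h ≠ f) (r : R.obj f.2.1) : skSingle k C R f r h = 0 := by
  rw [skSingle_eq]
  exact Pi.single_eq_of_ne (M := fun g : Mor C => R.obj g.2.1) hne r


lemma update_one_mul (x₀ : C) (hx : ∀ y : C, y = x₀) (v w : R.obj x₀) :
    (Function.update (fun x : C => (1 : R.obj x)) x₀ v) *
      (Function.update (fun x : C => (1 : R.obj x)) x₀ w) =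
    Function.update (fun x : C => (1 : R.obj x)) x₀ (v * w) := by
  funext z
  have hz := hx z; subst hz
  simp [Pi.mul_apply]

lemma skewMul_single (x₀ : C) (hx : ∀ y : C, y = x₀) (gm fm : x₀ ⟶ x₀)
    (r s : R.obj x₀) :
    skewMul k C R (skSingle k C R ⟨x₀, x₀, gm⟩ r) (skSingle k C R ⟨x₀, x₀, fm⟩ s) =
      skSingle k C R ⟨x₀, x₀, fm ≫ gm⟩ (r * R.map gm s) := by
  unfold skewMul
  rw [Finset.sum_eq_single (⟨x₀, x₀, gm⟩ : Mor C)]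
  · rw [Finset.sum_eq_single (⟨x₀, x₀, fm⟩ : Mor C)]
    · rw [dif_pos rfl]
      simp only [compMor, eqToHom_refl, Category.id_comp, skSingle_same,
        CategoryTheory.Functor.map_id, AlgCat.hom_id, AlgHom.coe_id, id_eq]
      rw [Category.id_comp]
    · intro f _ hf
      by_cases h : (⟨x₀, x₀, gm⟩ : Mor C).1 = f.2.1
      · rw [dif_pos h, skSingle_ne k C R hf, map_zero, map_zero, mul_zero]; exact skSingle_zero k C R _
      · rw [dif_neg h]
    · simp
  · intro g _ hg
    refine Finset.sum_eq_zero fun f _ => ?_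
    by_cases h : g.1 = f.2.1
    · rw [dif_pos h, skSingle_ne k C R hg, zero_mul]; exact skSingle_zero k C R _
    · rw [dif_neg h]
  · simp

lemma muB_single (g f : Mor C) :
    muB k C (Finsupp.single g (1:k) ⊗ₜ Finsupp.single f (1:k)) = catMulSingle k C g f := by
  simp [muB, catMulL, Finsupp.lsum_single, LinearMap.toSpanSingleton_apply]

lemma key (x₀ : C) (hx : ∀ y : C, y = x₀)
    (τ : CatAlg k C ⊗[k] TensA k C R →ₗ[k] TensA k C R ⊗[k] CatAlg k C)
    (hτ : TauFormula k C R τ)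
    (gx gy fx fy : C) (gm : gx ⟶ gy) (fm : fx ⟶ fy) (r : R.obj gy) (s : R.obj fy) :
    Psi k C R (skewMul k C R (skSingle k C R ⟨gx, gy, gm⟩ r) (skSingle k C R ⟨fx, fy, fm⟩ s)) =
      muTau k (muA k C R) (muB k C) τ
        (Psi k C R (skSingle k C R ⟨gx, gy, gm⟩ r) ⊗ₜ
          Psi k C R (skSingle k C R ⟨fx, fy, fm⟩ s)) := by
  have h1 := hx gx; subst h1
  have h2 := hx gy; subst h2
  have h3 := hx fx; subst h3
  have h4 := hx fy; subst h4
  rw [skewMul_single k C R _ hx, Psi_skSingle, Psi_skSingle, Psi_skSingle]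
  have hτ' : τ ((Finsupp.single (⟨fy, fy, gm⟩ : Mor C) (1:k)) ⊗ₜ
      (PiTensorProduct.tprod k (Function.update (fun x : C => (1 : R.obj x)) fy s))) =
      (PiTensorProduct.tprod k
        (Function.update (fun x : C => (1 : R.obj x)) fy (R.map gm s))) ⊗ₜ
        Finsupp.single (⟨fy, fy, gm⟩ : Mor C) (1:k) := by
    rw [hτ ⟨fy, fy, gm⟩]
    rw [Function.update_idem, Function.update_self]
  rw [muTau_tmul k (muA k C R) (muB k C) τ _ _ _ _ _ _ hτ']
  rw [muB_single]
  show _ = _ ⊗ₜ catMulSingle k C ⟨fy, fy, gm⟩ ⟨fy, fy, fm⟩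
  rw [catMulSingle, dif_pos rfl]
  have hA : muA k C R
      ((PiTensorProduct.tprod k (Function.update (fun x : C => (1 : R.obj x)) fy r)) ⊗ₜ
       (PiTensorProduct.tprod k (Function.update (fun x : C => (1 : R.obj x)) fy (R.map gm s)))) =
      PiTensorProduct.tprod k
        (Function.update (fun x : C => (1 : R.obj x)) fy (r * R.map gm s)) := by
    rw [muA, LinearMap.mul'_apply, PiTensorProduct.tprod_mul_tprod,
      update_one_mul k C R _ hx]
  rw [hA]
  simp [compMor]

lemma sum_skSingle (a : SkewAlg k C R) : ∑ g : Mor C, skSingle k C R g (a g) = a := by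
  simp only [skSingle_eq]
  exact Finset.univ_sum_single a

/-- if `C` has exactly one object (i.e. is a finite monoid), then the
embedding `Ψ : R[C] → R(x) ⊗_τ kC` is an isomorphism of `k`-algebras. -/
theorem skew_iso_twisted_of_single_object
    (x₀ : C) (hx : ∀ y : C, y = x₀)
    (τ : CatAlg k C ⊗[k] TensA k C R →ₗ[k] TensA k C R ⊗[k] CatAlg k C)
    (hτ : TauFormula k C R τ) :
    ∃ Ψ : SkewAlg k C R →ₗ[k] TensA k C R ⊗[k] CatAlg k C,
      (∀ (f : Mor C) (r : R.obj f.2.1),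
        Ψ (skSingle k C R f r) =
          (PiTensorProduct.tprod k
            (Function.update (fun x : C => (1 : R.obj x)) f.2.1 r)) ⊗ₜ Finsupp.single f 1) ∧
      Function.Bijective Ψ ∧
      Ψ (skewOne k C R) =
        (PiTensorProduct.tprod k fun x : C => (1 : R.obj x)) ⊗ₜ catOne k C ∧
      (∀ a b : SkewAlg k C R,
        Ψ (skewMul k C R a b) = muTau k (muA k C R) (muB k C) τ (Ψ a ⊗ₜ Ψ b)) := by
  refine ⟨Psi k C R, fun f r => Psi_skSingle k C R f r, ⟨?_, Psi_surjective k C R x₀ hx⟩,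
    Psi_one k C R, ?_⟩
  · intro a b hab
    have h := congrArg (Phi k C R x₀ hx) hab
    rwa [Phi_Psi, Phi_Psi] at h
  · intro a b
    rw [← sum_skSingle k C R a, ← sum_skSingle k C R b]
    have hmul : ∀ u v : SkewAlg k C R, skewMul k C R u v = skewMulL k C R u v := fun _ _ => rfl
    rw [hmul]
    simp only [map_sum, LinearMap.sum_apply, TensorProduct.sum_tmul, TensorProduct.tmul_sum]
    refine Finset.sum_congr rfl fun g _ => ?_
    refine Finset.sum_congr rfl fun f _ => ?_
    rw [← hmul]
    exact key k C R x₀ hx τ hτ f.1 f.2.1 g.1 g.2.1 f.2.2 g.2.2 (a f) (b g)
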